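/- Let A, B be finite nonempty subsets of an abelian group and let θ > 0 be real. Then 2^θ·|A+B|^{θ+1} ≤ (|A|·|B|)^θ·(|A+B| + (2^θ − 1)·𝔄(A,B)), where 𝔄(A,B) is the number of elements of A+B with a unique representation as a+b. -/

import Mathlib

open scoped Pointwise

variable {G : Type*} [AddCommGroup G] [DecidableEq G]

def repCount (A B : Finset G) (x : G) : ℕ :=
  ((A ×ˢ B).filter fun ab => ab.1 + ab.2 = x).card

def uniqueRep (A B : Finset G) : ℕ :=
  ((A + B).filter fun x => repCount A B x = 1).card

def addEnergy' (A B : Finset G) : ℕ :=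
  (((A ×ˢ A) ×ˢ B ×ˢ B).filter fun t => t.1.1 + t.2.1 = t.1.2 + t.2.2).card

lemma amgm2 (θ l : ℝ) (hθ : 0 < θ) (h0 : 0 ≤ l) (h1 : l ≤ 1) :
    (2:ℝ)^θ ≤ (2 - l)^θ * ((1 - l) + l * (2:ℝ)^θ) := by
  have key1 : (2:ℝ)^(1-l) ≤ 2 - l := by
    have := Real.geom_mean_le_arith_mean2_weighted (by linarith : (0:ℝ) ≤ 1 - l) h0
      (by norm_num : (0:ℝ) ≤ 2) zero_le_one (by ring)
    simpa [Real.one_rpow] using this.trans_eq (by ring)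
  have key2 : (2:ℝ)^(θ*l) ≤ (1 - l) + l * (2:ℝ)^θ := by
    have := Real.geom_mean_le_arith_mean2_weighted (by linarith : (0:ℝ) ≤ 1 - l) h0
      zero_le_one (Real.rpow_nonneg (by norm_num : (0:ℝ) ≤ 2) θ) (by ring)
    calc (2:ℝ)^(θ*l) = ((2:ℝ)^θ)^l := by rw [← Real.rpow_mul]; norm_num
      _ ≤ (1-l)*1 + l * (2:ℝ)^θ := by simpa [Real.one_rpow] using this
      _ = (1 - l) + l * (2:ℝ)^θ := by ring
  have e1 : (2:ℝ)^((1-l)*θ) ≤ (2-l)^θ := by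
    rw [show ((1-l)*θ) = (1-l)*θ by ring, Real.rpow_mul (by norm_num)]
    exact Real.rpow_le_rpow (Real.rpow_nonneg (by norm_num) _) key1 hθ.le
  calc (2:ℝ)^θ = (2:ℝ)^((1-l)*θ) * (2:ℝ)^(θ*l) := by
        rw [← Real.rpow_add (by norm_num)]; ring_nf
    _ ≤ (2-l)^θ * ((1 - l) + l * (2:ℝ)^θ) :=
        mul_le_mul e1 key2 (Real.rpow_nonneg (by norm_num) _) (Real.rpow_nonneg (by linarith) _)

lemma sum_repCount (A B : Finset G) :
    ∑ x ∈ A + B, repCount A B x = A.card * B.card := by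
  rw [← Finset.card_product]
  exact (Finset.card_eq_sum_card_fiberwise (fun ab hab => by
    obtain ⟨ha, hb⟩ := Finset.mem_product.1 hab
    exact Finset.add_mem_add ha hb)).symm

lemma one_le_repCount (A B : Finset G) {x : G} (hx : x ∈ A + B) :
    1 ≤ repCount A B x := by
  obtain ⟨a, ha, b, hb, rfl⟩ := Finset.mem_add.1 hx
  refine Finset.card_pos.2 ⟨(a, b), ?_⟩
  simp [Finset.mem_filter, Finset.mem_product, ha, hb]

lemma two_n_le (A B : Finset G) :
    2 * (A + B).card ≤ A.card * B.card + uniqueRep A B := by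
  rw [← sum_repCount A B, uniqueRep, Finset.card_filter]
  rw [← Finset.sum_add_distrib]
  calc 2 * (A + B).card = ∑ _x ∈ A + B, 2 := by rw [Finset.sum_const]; ring
    _ ≤ _ := ?_
  refine Finset.sum_le_sum fun x hx => ?_
  have h1 := one_le_repCount A B hx
  by_cases h : repCount A B x = 1
  · simp [h]
  · have : 2 ≤ repCount A B x := by omega
    simpa [h] using this

theorem stmt_8 (A B : Finset G) (hA : A.Nonempty) (hB : B.Nonempty) (θ : ℝ) (hθ : 0 < θ) :
    (2 : ℝ) ^ θ * ((A + B).card : ℝ) ^ (θ + 1) ≤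
      ((A.card : ℝ) * B.card) ^ θ *
        (((A + B).card : ℝ) + ((2 : ℝ) ^ θ - 1) * uniqueRep A B) := by
  set N : ℝ := ((A + B).card : ℝ) with hN
  set U : ℝ := (uniqueRep A B : ℝ) with hU
  set K : ℝ := ((A.card : ℝ) * B.card) with hK
  have hNpos : 0 < N := by
    have : 0 < (A + B).card := Finset.card_pos.2 (hA.add hB)
    rw [hN]; exact_mod_cast this
  have hU0 : 0 ≤ U := by positivity
  have hUN : U ≤ N := by
    have : uniqueRep A B ≤ (A + B).card := Finset.card_filter_le _ _
    rw [hN, hU]; exact_mod_cast this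
  have hKey : 2 * N ≤ K + U := by
    have := two_n_le A B
    have := (Nat.cast_le (α := ℝ)).2 this
    push_cast at this
    simpa [hN, hU, hK] using this
  set l : ℝ := U / N with hl
  have hl0 : 0 ≤ l := div_nonneg hU0 hNpos.le
  have hl1 : l ≤ 1 := (div_le_one hNpos).2 hUN
  have hUl : U = l * N := by rw [hl, div_mul_cancel₀ _ hNpos.ne']
  have hKge : N * (2 - l) ≤ K := by
    have : N * (2 - l) = 2 * N - U := by rw [hUl]; ring
    linarith [this]
  have h2θ : (1:ℝ) ≤ (2:ℝ)^θ := Real.one_le_rpow (by norm_num) hθ.le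
  have hform : N + ((2:ℝ)^θ - 1) * U = N * ((1 - l) + l * (2:ℝ)^θ) := by
    rw [hUl]; ring
  have hNθ : N ^ (θ + 1) = N ^ θ * N := by
    rw [Real.rpow_add hNpos, Real.rpow_one]
  have hNl : (0:ℝ) ≤ N * (2 - l) := by nlinarith
  have hKθ : (N * (2 - l)) ^ θ ≤ K ^ θ := Real.rpow_le_rpow hNl hKge hθ.le
  have hmul : (N * (2 - l)) ^ θ = N ^ θ * (2 - l) ^ θ :=
    Real.mul_rpow hNpos.le (by linarith)
  have hfact : 0 ≤ (1 - l) + l * (2:ℝ)^θ := by nlinarith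
  calc (2:ℝ)^θ * N ^ (θ + 1) = N ^ θ * N * (2:ℝ)^θ := by rw [hNθ]; ring
    _ ≤ N ^ θ * N * ((2 - l)^θ * ((1 - l) + l * (2:ℝ)^θ)) := by
        have := amgm2 θ l hθ hl0 hl1
        have hNN : 0 ≤ N ^ θ * N := mul_nonneg (Real.rpow_nonneg hNpos.le _) hNpos.le
        nlinarith [hNN, this]
    _ = (N * (2 - l)) ^ θ * (N * ((1 - l) + l * (2:ℝ)^θ)) := by rw [hmul]; ring
    _ ≤ K ^ θ * (N * ((1 - l) + l * (2:ℝ)^θ)) := by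
        have hpos : 0 ≤ N * ((1 - l) + l * (2:ℝ)^θ) := mul_nonneg hNpos.le hfact
        exact mul_le_mul_of_nonneg_right hKθ hpos
    _ = K ^ θ * (N + ((2:ℝ)^θ - 1) * U) := by rw [hform]
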